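/- Let 1 ≤ p < ∞, let X, Y, Z be Banach spaces, let Θ : Z → Y be right p-nuclear, let π : Z → Z/ker Θ be the quotient map and Θ̃ : Z/ker Θ → Y the induced map with Θ̃ ∘ π = Θ. If R : X → Z/ker Θ is a bounded linear map with ‖R‖ ≤ 1 and T = Θ̃ ∘ R, then T is p-compact and κ_p(T) ≤ ν^p(Θ). -/

import Mathlib

noncomputable section

open scoped ENNReal NNReal

/-- The conjugate exponent `p'` of `p : ℝ≥0∞`, characterized by `1/p + 1/p' = 1`
(with the conventions `1' = ∞` and `∞' = 1`). -/
def conjExp (p : ℝ≥0∞) : ℝ≥0∞ := (1 - 1/p)⁻¹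

theorem one_le_conjExp (p : ℝ≥0∞) : 1 ≤ conjExp p := by
  rw [conjExp]
  rw [ENNReal.one_le_inv]
  exact tsub_le_self

instance (p : ℝ≥0∞) : Fact (1 ≤ conjExp p) := ⟨one_le_conjExp p⟩

/-- The `ℓ_p`-norm `(∑ₙ ‖y n‖^p)^(1/p)` of a `p`-summable sequence `y`. -/
def lpNorm {X : Type*} [NormedAddCommGroup X] (p : ℝ≥0∞) (y : ℕ → X)
    (hy : Memℓp y p) : ℝ :=
  ‖(⟨y, hy⟩ : lp (fun _ : ℕ => X) p)‖

/-- The `p`-convex hull of a sequence `x` in `X`, taken with respect to the exponent `q`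
(in the applications below, `q` is the conjugate exponent of `p`):
the set of all sums `∑ₙ αₙ • xₙ` with `(αₙ) ∈ ℓ_q`, `‖(αₙ)‖_q ≤ 1`. -/
def pCo (𝕜 : Type*) [RCLike 𝕜] {X : Type*} [NormedAddCommGroup X] [NormedSpace 𝕜 X]
    (q : ℝ≥0∞) (x : ℕ → X) : Set X :=
  {v | ∃ α : lp (fun _ : ℕ => 𝕜) q, ‖α‖ ≤ 1 ∧ HasSum (fun n => α n • x n) v}

/-- A set `K ⊆ X` is relatively `p`-compact if it is contained in the `p`-convex hull of a
`p`-summable sequence of `X`. -/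
def RelPCompact (𝕜 : Type*) [RCLike 𝕜] {X : Type*} [NormedAddCommGroup X]
    [NormedSpace 𝕜 X] (p : ℝ≥0∞) (K : Set X) : Prop :=
  ∃ x : ℕ → X, Memℓp x p ∧ K ⊆ pCo 𝕜 (conjExp p) x

/-- A bounded linear map is `p`-compact if the image of the closed unit ball is contained in
the `p`-convex hull of a `p`-summable sequence of the target space. -/
def IsPCompact (𝕜 : Type*) [RCLike 𝕜] {X Y : Type*}
    [SeminormedAddCommGroup X] [NormedSpace 𝕜 X]
    [NormedAddCommGroup Y] [NormedSpace 𝕜 Y] (p : ℝ≥0∞) (T : X →L[𝕜] Y) : Prop :=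
  ∃ y : ℕ → Y, Memℓp y p ∧ T '' Metric.closedBall 0 1 ⊆ pCo 𝕜 (conjExp p) y

/-- The `p`-compact norm `κ_p(T) = inf { ‖(yₙ)‖_p : T(B_X) ⊆ p-co((yₙ)) }`. -/
def kappa (𝕜 : Type*) [RCLike 𝕜] {X Y : Type*}
    [SeminormedAddCommGroup X] [NormedSpace 𝕜 X]
    [NormedAddCommGroup Y] [NormedSpace 𝕜 Y] (p : ℝ≥0∞) (T : X →L[𝕜] Y) : ℝ :=
  sInf {c : ℝ | ∃ (y : ℕ → Y) (hy : Memℓp y p),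
    T '' Metric.closedBall 0 1 ⊆ pCo 𝕜 (conjExp p) y ∧ c = lpNorm p y hy}

/-- `C` is an upper bound for the weak `ℓ_q`-norm of the sequence `(x'ₙ)` of functionals,
i.e. `‖(x'ₙ(x))ₙ‖_q ≤ C‖x‖` for every `x` (equivalently,
`sup_{‖x‖ ≤ 1} ‖(x'ₙ(x))ₙ‖_q ≤ C`). -/
def WeakLpBound (𝕜 : Type*) [RCLike 𝕜] {X : Type*} [SeminormedAddCommGroup X]
    [NormedSpace 𝕜 X] (q : ℝ≥0∞) (x' : ℕ → (X →L[𝕜] 𝕜)) (C : ℝ) : Prop :=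
  ∀ x : X, ∃ h : Memℓp (fun n => x' n x) q, lpNorm q (fun n => x' n x) h ≤ C * ‖x‖

/-- A bounded linear map `T : X → Y` is right `p`-nuclear if `T x = ∑ₙ x'ₙ(x) yₙ` for some
weakly `p'`-summable sequence `(x'ₙ)` in `X'` and some `(yₙ)` with `∑ₙ ‖yₙ‖^p < ∞`. -/
def IsRightPNuclear (𝕜 : Type*) [RCLike 𝕜] {X Y : Type*}
    [SeminormedAddCommGroup X] [NormedSpace 𝕜 X]
    [NormedAddCommGroup Y] [NormedSpace 𝕜 Y] (p : ℝ≥0∞) (T : X →L[𝕜] Y) : Prop :=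
  ∃ (x' : ℕ → (X →L[𝕜] 𝕜)) (y : ℕ → Y) (C : ℝ), 0 ≤ C ∧
    WeakLpBound 𝕜 (conjExp p) x' C ∧ Memℓp y p ∧
    ∀ x : X, HasSum (fun n => x' n x • y n) (T x)

/-- The right `p`-nuclear norm
`ν^p(T) = inf ‖(x'ₙ)‖^w_{p'} ⬝ (∑ₙ ‖yₙ‖^p)^{1/p}` over all representations of `T`. -/
def nuP (𝕜 : Type*) [RCLike 𝕜] {X Y : Type*}
    [SeminormedAddCommGroup X] [NormedSpace 𝕜 X]
    [NormedAddCommGroup Y] [NormedSpace 𝕜 Y] (p : ℝ≥0∞) (T : X →L[𝕜] Y) : ℝ :=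
  sInf {c : ℝ | ∃ (x' : ℕ → (X →L[𝕜] 𝕜)) (y : ℕ → Y) (C : ℝ) (hy : Memℓp y p), 0 ≤ C ∧
    WeakLpBound 𝕜 (conjExp p) x' C ∧
    (∀ x : X, HasSum (fun n => x' n x • y n) (T x)) ∧
    c = C * lpNorm p y hy}
/-- If `Θ : Z → Y` is right `p`-nuclear, `Θ̃ : Z/ker Θ → Y` is the induced map on the quotient,
and `R : X → Z/ker Θ` is a bounded linear map with `‖R‖ ≤ 1`, then `T = Θ̃ ∘ R` is `p`-compact
with `κ_p(T) ≤ ν^p(Θ)`. -/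
theorem isPCompact_of_factorization {𝕜 X Y Z : Type*} [RCLike 𝕜]
    [NormedAddCommGroup X] [NormedSpace 𝕜 X] [CompleteSpace X]
    [NormedAddCommGroup Y] [NormedSpace 𝕜 Y] [CompleteSpace Y]
    [NormedAddCommGroup Z] [NormedSpace 𝕜 Z] [CompleteSpace Z]
    (p : ℝ≥0∞) (hp1 : 1 ≤ p) (hp : p ≠ ∞)
    (Θ : Z →L[𝕜] Y) (hΘ : IsRightPNuclear 𝕜 p Θ)
    (Θt : (Z ⧸ LinearMap.ker (Θ : Z →ₗ[𝕜] Y)) →L[𝕜] Y)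
    (hΘt : ∀ z : Z, Θt (Submodule.Quotient.mk z) = Θ z)
    (R : X →L[𝕜] Z ⧸ LinearMap.ker (Θ : Z →ₗ[𝕜] Y)) (hR : ‖R‖ ≤ 1)
    (T : X →L[𝕜] Y) (hT : T = Θt.comp R) :
    IsPCompact 𝕜 p T ∧ kappa 𝕜 p T ≤ nuP 𝕜 p Θ := by
  haveI : Fact (1 ≤ p) := ⟨hp1⟩
  -- Key inclusion: for any representation and any D > C,
  -- T(B_X) ⊆ p-co((D • yₙ)ₙ).
  have key : ∀ (z' : ℕ → (Z →L[𝕜] 𝕜)) (y : ℕ → Y) (C : ℝ), 0 ≤ C →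
      WeakLpBound 𝕜 (conjExp p) z' C →
      (∀ z : Z, HasSum (fun n => z' n z • y n) (Θ z)) →
      ∀ D : ℝ, C < D →
      T '' Metric.closedBall 0 1 ⊆ pCo 𝕜 (conjExp p) (fun n => ((D : ℝ) : 𝕜) • y n) := by
    intro z' y C hC hW hrep D hD
    have hD0 : 0 < D := lt_of_le_of_lt hC hD
    rintro v ⟨x, hx, rfl⟩
    rw [Metric.mem_closedBall, dist_zero_right] at hx
    have hRx : ‖R x‖ ≤ 1 := by
      refine le_trans (R.le_opNorm x) ?_
      nlinarith [norm_nonneg x, ContinuousLinearMap.opNorm_nonneg R]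
    set δ : ℝ := (D - C) / (C + 1) with hδdef
    have hδ : 0 < δ := div_pos (by linarith) (by linarith)
    obtain ⟨z, hz, hzn⟩ := Submodule.Quotient.norm_mk_lt (R x) hδ
    have hz1 : ‖z‖ ≤ 1 + δ := by linarith
    have hCδ : (C + 1) * δ = D - C := by
      rw [hδdef]; field_simp
    have hCz : C * ‖z‖ ≤ D := by
      nlinarith [mul_le_mul_of_nonneg_left hz1 hC, norm_nonneg z]
    obtain ⟨hmem, hnorm⟩ := hW z
    have hnormD : lpNorm (conjExp p) (fun n => z' n z) hmem ≤ D := le_trans hnorm hCz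
    set e : lp (fun _ : ℕ => 𝕜) (conjExp p) := ⟨fun n => z' n z, hmem⟩ with he
    have hE : ‖e‖ ≤ D := hnormD
    set c : 𝕜 := ((D⁻¹ : ℝ) : 𝕜) with hc
    have hcD : c * ((D : ℝ) : 𝕜) = 1 := by
      rw [hc, ← RCLike.ofReal_mul, inv_mul_cancel₀ hD0.ne', RCLike.ofReal_one]
    refine ⟨c • e, ?_, ?_⟩
    · have hns : ‖c • e‖ = ‖c‖ * ‖e‖ := norm_smul c e
      have hcn : ‖c‖ = D⁻¹ := by
        rw [hc, RCLike.norm_ofReal, abs_of_pos (inv_pos.2 hD0)]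
      rw [hns, hcn]
      calc D⁻¹ * ‖e‖ ≤ D⁻¹ * D :=
            mul_le_mul_of_nonneg_left hE (inv_nonneg.2 hD0.le)
        _ = 1 := inv_mul_cancel₀ hD0.ne'
    · have hTx : T x = Θ z := by
        rw [hT, ContinuousLinearMap.comp_apply, ← hz, hΘt]
      rw [hTx]
      have hfun : (fun n => (c • e) n • (((D : ℝ) : 𝕜) • y n)) =
          fun n => z' n z • y n := by
        funext n
        have h1 : (c • e) n = c * z' n z := by
          rw [lp.coeFn_smul]; rfl
        rw [h1, smul_smul]
        congr 1
        calc c * z' n z * ((D : ℝ) : 𝕜) = c * ((D : ℝ) : 𝕜) * z' n z := by ring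
          _ = z' n z := by rw [hcD, one_mul]
      rw [hfun]
      exact hrep z
  -- lpNorm of a scaled sequence
  have hsc : ∀ (y : ℕ → Y) (hy : Memℓp y p) (D : ℝ), 0 ≤ D →
      lpNorm p (fun n => ((D : ℝ) : 𝕜) • y n) (hy.const_smul ((D : ℝ) : 𝕜))
        = D * lpNorm p y hy := by
    intro y hy D hD
    unfold lpNorm
    have heq : (⟨fun n => ((D : ℝ) : 𝕜) • y n, hy.const_smul ((D : ℝ) : 𝕜)⟩ :
        lp (fun _ : ℕ => Y) p) = ((D : ℝ) : 𝕜) • (⟨y, hy⟩ : lp (fun _ : ℕ => Y) p) :=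
      Subtype.ext rfl
    rw [heq, norm_smul, RCLike.norm_ofReal, abs_of_nonneg hD]
  -- the kappa set is bounded below
  have hbdd : BddBelow {c : ℝ | ∃ (y : ℕ → Y) (hy : Memℓp y p),
      T '' Metric.closedBall 0 1 ⊆ pCo 𝕜 (conjExp p) y ∧ c = lpNorm p y hy} := by
    refine ⟨0, ?_⟩
    rintro c ⟨y, hy, -, rfl⟩
    exact norm_nonneg _
  -- main estimate: kappa ≤ C * lpNorm for every representation
  have main : ∀ (z' : ℕ → (Z →L[𝕜] 𝕜)) (y : ℕ → Y) (C : ℝ) (hy : Memℓp y p), 0 ≤ C →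
      WeakLpBound 𝕜 (conjExp p) z' C →
      (∀ z : Z, HasSum (fun n => z' n z • y n) (Θ z)) →
      kappa 𝕜 p T ≤ C * lpNorm p y hy := by
    intro z' y C hy hC hW hrep
    set L : ℝ := lpNorm p y hy with hL
    have hL0 : 0 ≤ L := norm_nonneg _
    have hbound : ∀ D : ℝ, C < D → kappa 𝕜 p T ≤ D * L := by
      intro D hD
      have hD0 : 0 ≤ D := hC.trans hD.le
      refine csInf_le hbdd ?_
      exact ⟨fun n => ((D : ℝ) : 𝕜) • y n, hy.const_smul _,
        key z' y C hC hW hrep D hD, (hsc y hy D hD0).symm⟩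
    refine le_of_forall_pos_le_add ?_
    intro ε hε
    have hD : C < C + ε / (L + 1) := lt_add_of_pos_right _ (div_pos hε (by linarith))
    calc kappa 𝕜 p T ≤ (C + ε / (L + 1)) * L := hbound _ hD
      _ ≤ C * L + ε := by
          have h1 : ε / (L + 1) * L ≤ ε := by
            rw [div_mul_eq_mul_div, div_le_iff₀ (by linarith)]
            nlinarith
          nlinarith
  obtain ⟨z'₀, y₀, C₀, hC₀, hW₀, hy₀, hrep₀⟩ := hΘ
  constructor
  · exact ⟨fun n => ((C₀ + 1 : ℝ) : 𝕜) • y₀ n, hy₀.const_smul _,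
      key z'₀ y₀ C₀ hC₀ hW₀ hrep₀ (C₀ + 1) (lt_add_one C₀)⟩
  · refine le_csInf ⟨_, z'₀, y₀, C₀, hy₀, hC₀, hW₀, hrep₀, rfl⟩ ?_
    rintro b ⟨z', y, C, hy, hC, hW, hrep, rfl⟩
    exact main z' y C hy hC hW hrep
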